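/- Let Ũ ⊆ ℝⁿ be open and let F : Ũ × ℝⁿ → ℝ be a horizontally C¹ family of asymmetric norms. Then the corresponding family of dual asymmetric norms F_* : Ũ × ℝⁿ → ℝ, F_*(x, α) = sup{⟨α, y⟩ : F(x, y) ≤ 1}, is locally Lipschitz on Ũ × ℝⁿ. -/

import Mathlib

open scoped RealInnerProductSpace

/-- `ℝⁿ` with the Euclidean inner product. -/
abbrev En (n : ℕ) := EuclideanSpace ℝ (Fin n)

/-- An asymmetric norm on `ℝⁿ`. -/
def IsAsymNorm {n : ℕ} (F : En n → ℝ) : Prop :=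
  (∀ y, 0 ≤ F y) ∧ (∀ y, F y = 0 ↔ y = 0) ∧
  (∀ l : ℝ, 0 < l → ∀ y, F (l • y) = l * F y) ∧
  (∀ y₁ y₂, F (y₁ + y₂) ≤ F y₁ + F y₂)

/-- A horizontally `C¹` family of asymmetric norms on `Ut × ℝⁿ`: `F` is continuous,
each `F x` is an asymmetric norm, and the partial derivative of `F` with respect to
the (horizontal) variable `x` exists everywhere and is continuous. -/
def HorizC1Family {n : ℕ} (Ut : Set (En n)) (F : En n → En n → ℝ) : Prop :=
  ContinuousOn (fun p : En n × En n => F p.1 p.2) (Ut ×ˢ Set.univ) ∧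
  (∀ x ∈ Ut, IsAsymNorm (F x)) ∧
  ∃ DF : En n × En n → (En n →L[ℝ] ℝ),
    (∀ x ∈ Ut, ∀ y, HasFDerivAt (fun x' => F x' y) (DF (x, y)) x) ∧
    ContinuousOn DF (Ut ×ˢ Set.univ)

/-- The family of dual asymmetric norms `F_*(x, α) = sup {⟨α, y⟩ : F x y ≤ 1}`. -/
noncomputable def dualNormF {n : ℕ} (F : En n → En n → ℝ) (x α : En n) : ℝ :=
  sSup ((fun y => ⟪α, y⟫) '' {y | F x y ≤ 1})

/-- The family of dual asymmetric norms of a horizontally `C¹` family of asymmetric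
norms is locally Lipschitz on `Ũ × ℝⁿ`. -/
theorem dual_family_locallyLipschitz {n : ℕ} (Ut : Set (En n)) (hUt : IsOpen Ut)
    (F : En n → En n → ℝ) (hF : HorizC1Family Ut F) :
    LocallyLipschitzOn (Ut ×ˢ (Set.univ : Set (En n)))
      (fun p : En n × En n => dualNormF F p.1 p.2) := by
  obtain ⟨hFcont, hFnorm, DF, hDF, hDFcont⟩ := hF
  rintro ⟨x₀, α₀⟩ hp
  rw [Set.mem_prod] at hp
  obtain ⟨hx₀, -⟩ := hp
  obtain ⟨r, hr0, hball⟩ := Metric.nhds_basis_closedBall.mem_iff.mp (hUt.mem_nhds hx₀)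
  set K : Set (En n) := Metric.closedBall x₀ r with hKdef
  have hKU : K ⊆ Ut := hball
  have hKc : IsCompact K := isCompact_closedBall x₀ r
  have hFzero : ∀ x ∈ Ut, F x 0 = 0 := fun x hx => ((hFnorm x hx).2.1 0).mpr rfl
  -- lower bound `c`
  have hc : ∃ c : ℝ, 0 < c ∧ ∀ x ∈ K, ∀ y, c * ‖y‖ ≤ F x y := by
    rcases subsingleton_or_nontrivial (En n) with hs | hs
    · refine ⟨1, one_pos, fun x hx y => ?_⟩
      have hy : y = 0 := Subsingleton.elim y 0
      simp [hy, hFzero x (hKU hx)]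
    · have hsph : (Metric.sphere (0 : En n) 1).Nonempty :=
        NormedSpace.sphere_nonempty.mpr zero_le_one
      have hScomp : IsCompact (K ×ˢ Metric.sphere (0 : En n) 1) :=
        hKc.prod (isCompact_sphere 0 1)
      have hSne : (K ×ˢ Metric.sphere (0 : En n) 1).Nonempty :=
        (Set.Nonempty.prod ⟨x₀, Metric.mem_closedBall_self hr0.le⟩ hsph)
      obtain ⟨⟨xm, ym⟩, hm, hmin⟩ := hScomp.exists_isMinOn hSne
        (hFcont.mono (Set.prod_mono hKU (Set.subset_univ _)))
      have hxmU : xm ∈ Ut := hKU hm.1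
      have hym : ‖ym‖ = 1 := by simpa using hm.2
      have hymne : ym ≠ 0 := by
        intro h; rw [h, norm_zero] at hym; exact one_ne_zero hym.symm
      have hc0 : 0 < F xm ym := by
        rcases lt_or_eq_of_le ((hFnorm xm hxmU).1 ym) with h | h
        · exact h
        · exact absurd (((hFnorm xm hxmU).2.1 ym).mp h.symm) hymne
      refine ⟨F xm ym, hc0, fun x hx y => ?_⟩
      rcases eq_or_ne y 0 with rfl | hy
      · simp [hFzero x (hKU hx)]
      · have hyn : (0:ℝ) < ‖y‖ := norm_pos_iff.mpr hy
        set u : En n := ‖y‖⁻¹ • y with hu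
        have hun : ‖u‖ = 1 := by
          rw [hu, norm_smul, norm_inv, norm_norm, inv_mul_cancel₀ hyn.ne']
        have huS : u ∈ Metric.sphere (0 : En n) 1 := by
          simpa using hun
        have hmin' : F xm ym ≤ F x u := hmin (Set.mk_mem_prod hx huS)
        have hhom := (hFnorm x (hKU hx)).2.2.1 ‖y‖ hyn u
        have hyu : ‖y‖ • u = y := by rw [hu, smul_inv_smul₀ hyn.ne']
        rw [hyu] at hhom
        rw [hhom, mul_comm]
        exact mul_le_mul_of_nonneg_left hmin' hyn.le
  obtain ⟨c, hc0, hcb⟩ := hc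
  have hcinv : (0:ℝ) < c⁻¹ := inv_pos.mpr hc0
  -- size bound on the unit-ball set
  have hyb : ∀ x ∈ K, ∀ y : En n, F x y ≤ 1 → ‖y‖ ≤ c⁻¹ := by
    intro x hx y hy
    have h1 : c * ‖y‖ ≤ 1 := (hcb x hx y).trans hy
    have h2 : c * ‖y‖ ≤ c * c⁻¹ := by rw [mul_inv_cancel₀ hc0.ne']; exact h1
    exact (mul_le_mul_iff_right₀ hc0).mp h2
  -- bound on DF
  have hTcomp : IsCompact (K ×ˢ Metric.closedBall (0 : En n) c⁻¹) :=
    hKc.prod (isCompact_closedBall _ _)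
  obtain ⟨M₀, hM₀⟩ := hTcomp.exists_bound_of_continuousOn
    (hDFcont.mono (Set.prod_mono hKU (Set.subset_univ _)))
  set M : ℝ := max M₀ 0 with hMdef
  have hM0 : (0:ℝ) ≤ M := le_max_right _ _
  have hMb : ∀ z ∈ K, ∀ y : En n, ‖y‖ ≤ c⁻¹ → ‖DF (z, y)‖ ≤ M := by
    intro z hz y hy
    refine le_trans (hM₀ (z, y) (Set.mk_mem_prod hz ?_)) (le_max_left _ _)
    simpa [Metric.mem_closedBall, dist_zero_right] using hy
  -- mean value bound
  have hLipF : ∀ x ∈ K, ∀ x' ∈ K, ∀ y : En n, ‖y‖ ≤ c⁻¹ →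
      ‖F x y - F x' y‖ ≤ M * ‖x - x'‖ := by
    intro x hx x' hx' y hy
    have := Convex.norm_image_sub_le_of_norm_hasFDerivWithin_le
      (f := fun z => F z y) (f' := fun z => DF (z, y)) (s := K) (C := M)
      (fun z hz => ((hDF z (hKU hz) y).hasFDerivWithinAt))
      (fun z hz => hMb z hz y hy) (convex_closedBall x₀ r) hx' hx
    exact this
  -- dual norm basic facts
  have hSne : ∀ x ∈ Ut, ∀ α : En n,
      ((fun y => ⟪α, y⟫) '' {y | F x y ≤ 1}).Nonempty := by
    intro x hx α
    exact ⟨⟪α, (0 : En n)⟫, ⟨0, by simp [Set.mem_setOf_eq, hFzero x hx], rfl⟩⟩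
  have hubset : ∀ x ∈ K, ∀ α : En n,
      ∀ z ∈ (fun y => ⟪α, y⟫) '' {y | F x y ≤ 1}, z ≤ ‖α‖ * c⁻¹ := by
    intro x hx α z hz
    obtain ⟨y, hy, rfl⟩ := hz
    calc ⟪α, y⟫ ≤ ‖α‖ * ‖y‖ := real_inner_le_norm α y
    _ ≤ ‖α‖ * c⁻¹ := mul_le_mul_of_nonneg_left (hyb x hx y hy) (norm_nonneg α)
  have hmemle : ∀ x ∈ K, ∀ α y : En n, F x y ≤ 1 → ⟪α, y⟫ ≤ dualNormF F x α := by
    intro x hx α y hy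
    exact le_csSup ⟨‖α‖ * c⁻¹, fun z hz => hubset x hx α z hz⟩ ⟨y, hy, rfl⟩
  have hcsSup_le : ∀ x ∈ K, ∀ α : En n, ∀ B : ℝ,
      (∀ y, F x y ≤ 1 → ⟪α, y⟫ ≤ B) → dualNormF F x α ≤ B := by
    intro x hx α B hB
    refine csSup_le (hSne x (hKU hx) α) ?_
    rintro z ⟨y, hy, rfl⟩
    exact hB y hy
  have hDle : ∀ x ∈ K, ∀ α : En n, dualNormF F x α ≤ ‖α‖ * c⁻¹ := by
    intro x hx α
    exact hcsSup_le x hx α _ (fun y hy => hubset x hx α _ ⟨y, hy, rfl⟩)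
  -- Lipschitz in α
  have hDalpha : ∀ x ∈ K, ∀ α β : En n,
      dualNormF F x α - dualNormF F x β ≤ c⁻¹ * ‖α - β‖ := by
    intro x hx α β
    rw [sub_le_iff_le_add]
    refine hcsSup_le x hx α _ (fun y hy => ?_)
    have h1 : ⟪α, y⟫ = ⟪β, y⟫ + ⟪α - β, y⟫ := by
      rw [inner_sub_left]; ring
    have h2 : ⟪β, y⟫ ≤ dualNormF F x β := hmemle x hx β y hy
    have h3 : ⟪α - β, y⟫ ≤ ‖α - β‖ * ‖y‖ := real_inner_le_norm _ _
    have h4 : ‖α - β‖ * ‖y‖ ≤ ‖α - β‖ * c⁻¹ :=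
      mul_le_mul_of_nonneg_left (hyb x hx y hy) (norm_nonneg _)
    rw [h1]
    nlinarith [norm_nonneg (α - β)]
  -- Lipschitz in x
  have hDx : ∀ x ∈ K, ∀ x' ∈ K, ∀ α : En n,
      dualNormF F x' α - dualNormF F x α ≤ M * ‖x - x'‖ * (‖α‖ * c⁻¹) := by
    intro x hx x' hx' α
    set t : ℝ := M * ‖x - x'‖ with htdef
    have ht0 : 0 ≤ t := mul_nonneg hM0 (norm_nonneg _)
    set s : ℝ := 1 + t with hsdef
    have hs0 : (0:ℝ) < s := by linarith
    rw [sub_le_iff_le_add]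
    refine hcsSup_le x' hx' α _ (fun y hy => ?_)
    have hyn : ‖y‖ ≤ c⁻¹ := hyb x' hx' y hy
    have hmv : F x y - F x' y ≤ t := by
      have := hLipF x hx x' hx' y hyn
      have h := le_trans (le_abs_self _) this
      exact h
    have hFxy : F x y ≤ s := by
      have : F x y ≤ F x' y + t := by linarith
      linarith
    have hhom := (hFnorm x (hKU hx)).2.2.1 s⁻¹ (inv_pos.mpr hs0) y
    have hsc : F x (s⁻¹ • y) ≤ 1 := by
      rw [hhom]
      calc s⁻¹ * F x y ≤ s⁻¹ * s :=
        mul_le_mul_of_nonneg_left hFxy (inv_pos.mpr hs0).le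
      _ = 1 := inv_mul_cancel₀ hs0.ne'
    have hkey : ⟪α, s⁻¹ • y⟫ ≤ dualNormF F x α := hmemle x hx α _ hsc
    rw [real_inner_smul_right] at hkey
    have hD0 : dualNormF F x α ≤ ‖α‖ * c⁻¹ := hDle x hx α
    have h5 : ⟪α, y⟫ ≤ s * dualNormF F x α := by
      have := mul_le_mul_of_nonneg_left hkey hs0.le
      rw [← mul_assoc, mul_inv_cancel₀ hs0.ne', one_mul] at this
      exact this
    calc ⟪α, y⟫ ≤ s * dualNormF F x α := h5
    _ = dualNormF F x α + t * dualNormF F x α := by rw [hsdef]; ring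
    _ ≤ dualNormF F x α + t * (‖α‖ * c⁻¹) := by nlinarith
    _ = t * (‖α‖ * c⁻¹) + dualNormF F x α := by ring
  -- assemble
  set L : ℝ := M * (‖α₀‖ + 1) * c⁻¹ + c⁻¹ with hLdef
  have hL0 : 0 ≤ L := by positivity
  refine ⟨L.toNNReal, (K ×ˢ Metric.closedBall α₀ 1) ∩ (Ut ×ˢ Set.univ), ?_, ?_⟩
  · exact Filter.inter_mem
      (nhdsWithin_le_nhds (prod_mem_nhds
        (Metric.closedBall_mem_nhds x₀ hr0) (Metric.closedBall_mem_nhds α₀ one_pos)))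
      self_mem_nhdsWithin
  · have key : ∀ x ∈ K, ∀ α ∈ Metric.closedBall α₀ 1, ∀ x' ∈ K,
        ∀ α' ∈ Metric.closedBall α₀ 1,
        dualNormF F x α - dualNormF F x' α' ≤
          L * dist ((x, α) : En n × En n) (x', α') := by
      intro x hx α hα x' hx' α' hα'
      have hαn : ‖α‖ ≤ ‖α₀‖ + 1 := by
        have : ‖α - α₀‖ ≤ 1 := by
          rw [← dist_eq_norm]; exact Metric.mem_closedBall.mp hα
        calc ‖α‖ = ‖α₀ + (α - α₀)‖ := by rw [add_sub_cancel]
        _ ≤ ‖α₀‖ + ‖α - α₀‖ := norm_add_le _ _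
        _ ≤ ‖α₀‖ + 1 := by linarith
      have hpd : dist ((x, α) : En n × En n) (x', α') =
          max (dist x x') (dist α α') := Prod.dist_eq
      have hd1 : ‖x' - x‖ ≤ dist ((x, α) : En n × En n) (x', α') := by
        rw [← dist_eq_norm, dist_comm, hpd]
        exact le_max_left _ _
      have hd2 : ‖α - α'‖ ≤ dist ((x, α) : En n × En n) (x', α') := by
        rw [← dist_eq_norm, hpd]
        exact le_max_right _ _
      have h1 : dualNormF F x α - dualNormF F x' α ≤ M * ‖x' - x‖ * (‖α‖ * c⁻¹) :=
        hDx x' hx' x hx α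
      have h2 : dualNormF F x' α - dualNormF F x' α' ≤ c⁻¹ * ‖α - α'‖ :=
        hDalpha x' hx' α α'
      set d : ℝ := dist ((x, α) : En n × En n) (x', α') with hddef
      have hd0 : 0 ≤ d := dist_nonneg
      have h3 : M * ‖x' - x‖ * (‖α‖ * c⁻¹) ≤ M * (‖α₀‖ + 1) * c⁻¹ * d := by
        have hn2 : 0 ≤ ‖α‖ := norm_nonneg _
        have hmm : ‖x' - x‖ * ‖α‖ ≤ d * (‖α₀‖ + 1) := mul_le_mul hd1 hαn hn2 hd0
        calc M * ‖x' - x‖ * (‖α‖ * c⁻¹) = (M * c⁻¹) * (‖x' - x‖ * ‖α‖) := by ring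
        _ ≤ (M * c⁻¹) * (d * (‖α₀‖ + 1)) :=
          mul_le_mul_of_nonneg_left hmm (mul_nonneg hM0 hcinv.le)
        _ = M * (‖α₀‖ + 1) * c⁻¹ * d := by ring
      have h4 : c⁻¹ * ‖α - α'‖ ≤ c⁻¹ * d :=
        mul_le_mul_of_nonneg_left hd2 hcinv.le
      calc dualNormF F x α - dualNormF F x' α' =
          (dualNormF F x α - dualNormF F x' α) +
          (dualNormF F x' α - dualNormF F x' α') := by ring
      _ ≤ M * ‖x' - x‖ * (‖α‖ * c⁻¹) + c⁻¹ * ‖α - α'‖ := add_le_add h1 h2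
      _ ≤ M * (‖α₀‖ + 1) * c⁻¹ * d + c⁻¹ * d := add_le_add h3 h4
      _ = L * d := by rw [hLdef]; ring
    refine LipschitzOnWith.of_dist_le_mul ?_
    rintro ⟨x, α⟩ ⟨⟨hxK, hα⟩, -⟩ ⟨x', α'⟩ ⟨⟨hx'K, hα'⟩, -⟩
    rw [Real.dist_eq, Real.coe_toNNReal L hL0]
    rw [abs_sub_le_iff]
    constructor
    · exact key x hxK α hα x' hx'K α' hα'
    · have := key x' hx'K α' hα' x hxK α hα
      rwa [dist_comm] at this
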